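/- Fix an integer s ≥ 2. Let X_1, X_2, … be an i.i.d. sequence of random variables with the Hill-horror distribution HH(α), α > 0, and for each i ∈ ℕ let Q_{i,s}^{HH*} = [log(X_{(is, i(s+1)−1)}/X_{(i, i(s+1)−1)}) + log(1 − log(s)/log(s+1))]/log(s) be computed from the first n = i(s+1)−1 observations. Then Q_{i,s}^{HH*} converges almost surely to 1/α as i → ∞. -/

import Mathlib

open MeasureTheory ProbabilityTheory Real Filter
open Topology

/-- The `k`-th order statistic (1-based indexing) of the sample `x : Fin n → ℝ`. -/
noncomputable def orderStat (n : ℕ) (x : Fin n → ℝ) (k : ℕ) : ℝ :=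
  (Multiset.sort ((List.ofFn x : List ℝ) : Multiset ℝ) (· ≤ ·)).getD (k - 1) 0

/-- The quantile function of the Hill-horror distribution `HH(α)`. -/
noncomputable def hillHorrorQuantile (α : ℝ) (p : ℝ) : ℝ :=
  -Real.log (1 - p) / (1 - p) ^ (1 / α)

-- sorted list characterization
lemma sorted_get_le_iff {l : List ℝ} (hl : l.Pairwise (· ≤ ·)) {k : ℕ} (hk1 : 1 ≤ k)
    (hkn : k ≤ l.length) (t : ℝ) :
    l.get ⟨k-1, by omega⟩ ≤ t ↔ k ≤ l.countP (fun a => decide (a ≤ t)) := by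
  constructor
  · intro h
    have h1 : l.countP (fun a => decide (a ≤ t)) =
        (l.take k).countP (fun a => decide (a ≤ t)) +
        (l.drop k).countP (fun a => decide (a ≤ t)) := by
      rw [← List.countP_append, List.take_append_drop]
    have h2 : (l.take k).countP (fun a => decide (a ≤ t)) = (l.take k).length := by
      rw [List.countP_eq_length]
      intro a ha
      obtain ⟨i, hi, rfl⟩ := List.mem_iff_getElem.mp ha
      have hik : i < k := by simp at hi; omega
      have hilen : i < l.length := lt_of_lt_of_le hik hkn
      rw [List.getElem_take]
      have hle : l.get ⟨i, hilen⟩ ≤ l.get ⟨k-1, by omega⟩ := by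
        apply hl.rel_get_of_le
        simp only [Fin.mk_le_mk]
        omega
      simpa using (le_trans hle h)
    have h3 : (l.take k).length = k := by simp; omega
    omega
  · intro h
    by_contra hlt
    push_neg at hlt
    have h1 : l.countP (fun a => decide (a ≤ t)) =
        (l.take (k-1)).countP (fun a => decide (a ≤ t)) +
        (l.drop (k-1)).countP (fun a => decide (a ≤ t)) := by
      rw [← List.countP_append, List.take_append_drop]
    have h2 : (l.drop (k-1)).countP (fun a => decide (a ≤ t)) = 0 := by
      rw [List.countP_eq_zero]
      intro a ha
      obtain ⟨i, hi, rfl⟩ := List.mem_iff_getElem.mp ha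
      have hlen : (l.drop (k-1)).length = l.length - (k-1) := List.length_drop
      have hidx : k - 1 + i < l.length := by omega
      rw [List.getElem_drop]
      have hge : l.get ⟨k-1, by omega⟩ ≤ l.get ⟨k-1+i, hidx⟩ := by
        apply hl.rel_get_of_le
        simp only [Fin.mk_le_mk]
        omega
      simp only [decide_eq_true_eq]
      intro hcon
      exact absurd (le_trans hge hcon) (not_le.mpr hlt)
    have h4 := List.countP_le_length (p := fun a => decide (a ≤ t)) (l := l.take (k-1))
    have h5 : (l.take (k-1)).length ≤ k - 1 := by simp
    omega

lemma orderStat_le_iff {n : ℕ} (x : Fin n → ℝ) {k : ℕ} (hk1 : 1 ≤ k) (hkn : k ≤ n) (t : ℝ) :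
    orderStat n x k ≤ t ↔ k ≤ (Finset.univ.filter (fun j => x j ≤ t)).card := by
  set l := Multiset.sort ((List.ofFn x : List ℝ) : Multiset ℝ) (· ≤ ·) with hldef
  have hlen : l.length = n := by
    rw [hldef, Multiset.length_sort]
    simp
  have hsorted : l.Pairwise (· ≤ ·) := Multiset.pairwise_sort _ _
  have hcount : l.countP (fun a => decide (a ≤ t)) =
      (Finset.univ.filter (fun j => x j ≤ t)).card := by
    have h1 : Multiset.countP (fun a => a ≤ t) (l : Multiset ℝ)
        = Multiset.countP (fun a => a ≤ t) ((List.ofFn x : List ℝ) : Multiset ℝ) := by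
      rw [hldef, Multiset.sort_eq]
    rw [Multiset.coe_countP] at h1
    rw [h1]
    rw [← Fin.univ_val_map]
    rw [Multiset.countP_map]
    rw [Finset.card_def, Finset.filter_val, ← Multiset.countP_eq_card_filter]
  have hget : orderStat n x k = l.get ⟨k-1, by omega⟩ := by
    rw [orderStat, ← hldef, List.getD_eq_getElem]
    rfl
  rw [hget, sorted_get_le_iff hsorted hk1 (by omega) t, hcount]

lemma hq_pos {α : ℝ} (hα : 0 < α) {p : ℝ} (hp : p ∈ Set.Ioo (0:ℝ) 1) :
    0 < hillHorrorQuantile α p := by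
  obtain ⟨h0, h1⟩ := hp
  have h1p : 0 < 1 - p := by linarith
  have hlog : Real.log (1 - p) < 0 := Real.log_neg h1p (by linarith)
  have hd : 0 < (1-p) ^ (1/α) := Real.rpow_pos_of_pos h1p _
  exact div_pos (by linarith) hd

lemma hq_strictMonoOn {α : ℝ} (hα : 0 < α) :
    StrictMonoOn (hillHorrorQuantile α) (Set.Ioo 0 1) := by
  intro u hu v hv huv
  have h1u : 0 < 1 - u := by have := hu.2; linarith
  have h1v : 0 < 1 - v := by have := hv.2; linarith
  have hvu : 1 - v < 1 - u := by linarith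
  have hnum : -Real.log (1-u) < -Real.log (1-v) := by
    have := Real.log_lt_log h1v hvu; linarith
  have hnum0 : 0 ≤ -Real.log (1-u) := by
    have := Real.log_nonpos (x := 1-u) (by linarith) (by have := hu.1; linarith); linarith
  have hden : (1-v)^(1/α) < (1-u)^(1/α) :=
    Real.rpow_lt_rpow h1v.le hvu (by positivity)
  have hdv : 0 < (1-v)^(1/α) := Real.rpow_pos_of_pos h1v _
  unfold hillHorrorQuantile
  calc -Real.log (1-u) / (1-u)^(1/α) ≤ -Real.log (1-u) / (1-v)^(1/α) :=
        div_le_div_of_nonneg_left hnum0 hdv hden.le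
      _ < -Real.log (1-v) / (1-v)^(1/α) := div_lt_div_of_pos_right hnum hdv

lemma hq_measurable {α : ℝ} (hα : 0 < α) : Measurable (hillHorrorQuantile α) := by
  have h1 : Measurable fun p : ℝ => 1 - p := measurable_const.sub measurable_id
  exact ((Real.measurable_log.comp h1).neg).div (by
    have : (fun p : ℝ => (1 - p) ^ (1/α)) = (fun y : ℝ => y ^ (1/α)) ∘ (fun p : ℝ => 1 - p) := rfl
    rw [this]
    exact ((Real.continuous_rpow_const (by positivity)).measurable).comp h1)

lemma hq_continuousAt {α : ℝ} (hα : 0 < α) {p : ℝ} (hp : p ∈ Set.Ioo (0:ℝ) 1) :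
    ContinuousAt (hillHorrorQuantile α) p := by
  have h1p : 0 < 1 - p := by have := hp.2; linarith
  have hden : ContinuousAt (fun q : ℝ => (1 - q) ^ (1/α)) p :=
    (Real.continuousAt_rpow_const _ _ (Or.inl (ne_of_gt h1p))).comp
      ((continuous_const.sub continuous_id).continuousAt)
  have hnum : ContinuousAt (fun q : ℝ => -Real.log (1 - q)) p :=
    ((Real.continuousAt_log (ne_of_gt h1p)).comp
      ((continuous_const.sub continuous_id).continuousAt)).neg
  exact hnum.div hden (ne_of_gt (Real.rpow_pos_of_pos h1p _))

lemma hq_cdf {α : ℝ} (hα : 0 < α) {p : ℝ} (hp : p ∈ Set.Ioo (0:ℝ) 1) :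
    Measure.map (fun u => hillHorrorQuantile α u) (volume.restrict (Set.Ioo (0:ℝ) 1))
      (Set.Iic (hillHorrorQuantile α p)) = ENNReal.ofReal p := by
  rw [Measure.map_apply (hq_measurable hα) measurableSet_Iic,
    Measure.restrict_apply' measurableSet_Ioo]
  have hset : (fun u => hillHorrorQuantile α u) ⁻¹' Set.Iic (hillHorrorQuantile α p)
      ∩ Set.Ioo 0 1 = Set.Ioc 0 p := by
    ext u
    simp only [Set.mem_inter_iff, Set.mem_preimage, Set.mem_Iic, Set.mem_Ioo, Set.mem_Ioc]
    constructor
    · rintro ⟨hle, hu0, hu1⟩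
      refine ⟨hu0, ?_⟩
      by_contra hgt
      push_neg at hgt
      exact absurd ((hq_strictMonoOn hα) hp ⟨hu0, hu1⟩ hgt) (not_lt.mpr hle)
    · rintro ⟨hu0, hup⟩
      refine ⟨?_, hu0, lt_of_le_of_lt hup hp.2⟩
      rcases eq_or_lt_of_le hup with rfl | hlt
      · exact le_refl _
      · exact le_of_lt ((hq_strictMonoOn hα) ⟨hu0, lt_trans hlt hp.2⟩ hp hlt)
  rw [hset, Real.volume_Ioc]
  simp

lemma count_SLLN {Ω : Type*} [MeasurableSpace Ω] (μ : Measure Ω) [IsProbabilityMeasure μ]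
    (X : ℕ → Ω → ℝ) (hmeas : ∀ k, Measurable (X k))
    (hindep : iIndepFun X μ)
    (hident : ∀ k, IdentDistrib (X k) (X 0) μ μ) (t : ℝ) :
    ∀ᵐ ω ∂μ, Tendsto (fun n : ℕ =>
        ((Finset.univ.filter (fun j : Fin n => X j ω ≤ t)).card : ℝ) / n)
      atTop (𝓝 ((μ (X 0 ⁻¹' Set.Iic t)).toReal)) := by
  set g : ℝ → ℝ := (Set.Iic t).indicator (fun _ => (1:ℝ)) with hg
  have hgmeas : Measurable g := measurable_const.indicator measurableSet_Iic
  set Y : ℕ → Ω → ℝ := fun k ω => g (X k ω) with hY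
  have hY0 : Y 0 = Set.indicator (X 0 ⁻¹' Set.Iic t) (fun _ => (1:ℝ)) := by
    ext ω
    by_cases h : X 0 ω ∈ Set.Iic t <;> simp [hY, hg, Set.indicator, h] <;> simpa [Set.mem_Iic] using h
  have hint : Integrable (Y 0) μ := by
    rw [hY0]
    exact (integrable_const (1:ℝ)).indicator ((hmeas 0) measurableSet_Iic)
  have hindep' : Pairwise (Function.onFun (IndepFun · · μ) Y) := fun i j hij =>
    (hindep.indepFun hij).comp hgmeas hgmeas
  have hident' : ∀ k, IdentDistrib (Y k) (Y 0) μ μ := fun k =>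
    (hident k).comp hgmeas
  have hmean : μ[Y 0] = (μ (X 0 ⁻¹' Set.Iic t)).toReal := by
    rw [hY0, integral_indicator_const (1:ℝ) ((hmeas 0) measurableSet_Iic)]
    simp
    rfl
  have hsl := strong_law_ae_real Y hint hindep' hident'
  filter_upwards [hsl] with ω hω
  rw [hmean] at hω
  refine hω.congr (fun n => ?_)
  congr 1
  rw [Finset.card_filter]
  push_cast
  rw [Fin.sum_univ_eq_sum_range (fun j => if X j ω ≤ t then (1:ℝ) else 0)]
  refine Finset.sum_congr rfl (fun i _ => ?_)
  by_cases h : X i ω ≤ t <;> simp [hY, hg, Set.indicator, h]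


lemma orderStat_conv {Ω : Type*} [MeasurableSpace Ω] (μ : Measure Ω) [IsProbabilityMeasure μ]
    {α : ℝ} (hα : 0 < α)
    (X : ℕ → Ω → ℝ) (hmeas : ∀ k, Measurable (X k))
    (hindep : iIndepFun X μ)
    (hdist : ∀ k, Measure.map (X k) μ =
      Measure.map (fun u => hillHorrorQuantile α u) (volume.restrict (Set.Ioo (0 : ℝ) 1)))
    (n k : ℕ → ℕ) (hn : Tendsto n atTop atTop)
    (hk1 : ∀ᶠ i in atTop, 1 ≤ k i) (hkn : ∀ᶠ i in atTop, k i ≤ n i)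
    {p0 : ℝ} (hp0 : p0 ∈ Set.Ioo (0:ℝ) 1)
    (hratio : Tendsto (fun i => (k i : ℝ) / (n i : ℝ)) atTop (𝓝 p0)) :
    ∀ᵐ ω ∂μ, Tendsto (fun i => orderStat (n i) (fun j => X j ω) (k i)) atTop
      (𝓝 (hillHorrorQuantile α p0)) := by
  have hident : ∀ j, IdentDistrib (X j) (X 0) μ μ := fun j =>
    ⟨(hmeas j).aemeasurable, (hmeas 0).aemeasurable, by rw [hdist j, hdist 0]⟩
  have hcdf : ∀ {ρ : ℝ}, ρ ∈ Set.Ioo (0:ℝ) 1 →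
      (μ (X 0 ⁻¹' Set.Iic (hillHorrorQuantile α ρ))).toReal = ρ := by
    intro ρ hρ
    have h1 : μ (X 0 ⁻¹' Set.Iic (hillHorrorQuantile α ρ)) =
        Measure.map (X 0) μ (Set.Iic (hillHorrorQuantile α ρ)) :=
      (Measure.map_apply (hmeas 0) measurableSet_Iic).symm
    rw [h1, hdist 0, hq_cdf hα hρ, ENNReal.toReal_ofReal hρ.1.le]
  have hae : ∀ᵐ ω ∂μ, ∀ ρ : ℚ, (ρ:ℝ) ∈ Set.Ioo (0:ℝ) 1 →
      Tendsto (fun m : ℕ =>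
        ((Finset.univ.filter (fun j : Fin m => X j ω ≤ hillHorrorQuantile α ρ)).card : ℝ) / m)
        atTop (𝓝 (ρ:ℝ)) := by
    rw [ae_all_iff]
    intro ρ
    by_cases hρ : (ρ:ℝ) ∈ Set.Ioo (0:ℝ) 1
    · filter_upwards [count_SLLN μ X hmeas hindep hident (hillHorrorQuantile α ρ)] with ω hω
      intro _
      rwa [hcdf hρ] at hω
    · exact Eventually.of_forall (fun ω h => absurd h hρ)
  filter_upwards [hae] with ω hω
  rw [tendsto_order]
  constructor
  · -- lower bound
    intro b hb
    -- find rational ρ < p0 with b < q ρ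
    have hqc : ContinuousAt (hillHorrorQuantile α) p0 := hq_continuousAt hα hp0
    have hmem : (hillHorrorQuantile α) ⁻¹' Set.Ioi b ∈ 𝓝 p0 := hqc (Ioi_mem_nhds hb)
    obtain ⟨l, u, hplu, hsub⟩ := mem_nhds_iff_exists_Ioo_subset.mp hmem
    obtain ⟨ρ, hρ1, hρ2⟩ := exists_rat_btwn (show max l 0 < p0 from max_lt hplu.1 hp0.1)
    have hρIoo : (ρ:ℝ) ∈ Set.Ioo (0:ℝ) 1 :=
      ⟨lt_of_le_of_lt (le_max_right l 0) hρ1, lt_trans hρ2 hp0.2⟩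
    have hbq : b < hillHorrorQuantile α ρ :=
      hsub ⟨lt_of_le_of_lt (le_max_left l 0) hρ1, lt_trans hρ2 hplu.2⟩
    have hcnt : Tendsto (fun i =>
        ((Finset.univ.filter (fun j : Fin (n i) => X j ω ≤ hillHorrorQuantile α ρ)).card : ℝ)
          / (n i)) atTop (𝓝 (ρ:ℝ)) := (hω ρ hρIoo).comp hn
    have hlt : ∀ᶠ i in atTop,
        ((Finset.univ.filter (fun j : Fin (n i) => X j ω ≤ hillHorrorQuantile α ρ)).card : ℝ)
          / (n i) < (k i : ℝ) / (n i) := hcnt.eventually_lt hratio hρ2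
    have hnpos : ∀ᶠ i in atTop, 0 < n i := hn.eventually_gt_atTop 0
    filter_upwards [hlt, hnpos, hk1, hkn] with i h1 h2 h3 h4
    have hcard : (Finset.univ.filter
        (fun j : Fin (n i) => X j ω ≤ hillHorrorQuantile α ρ)).card < k i := by
      have := (div_lt_div_iff_of_pos_right (by exact_mod_cast h2 : (0:ℝ) < n i)).mp h1
      exact_mod_cast this
    have hnot : ¬ (orderStat (n i) (fun j => X j ω) (k i) ≤ hillHorrorQuantile α ρ) := by
      rw [orderStat_le_iff _ h3 h4]
      omega
    exact lt_trans hbq (lt_of_not_ge hnot)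
  · -- upper bound
    intro b hb
    have hqc : ContinuousAt (hillHorrorQuantile α) p0 := hq_continuousAt hα hp0
    have hmem : (hillHorrorQuantile α) ⁻¹' Set.Iio b ∈ 𝓝 p0 := hqc (Iio_mem_nhds hb)
    obtain ⟨l, u, hplu, hsub⟩ := mem_nhds_iff_exists_Ioo_subset.mp hmem
    obtain ⟨ρ, hρ1, hρ2⟩ := exists_rat_btwn (show p0 < min u 1 from lt_min hplu.2 hp0.2)
    have hρIoo : (ρ:ℝ) ∈ Set.Ioo (0:ℝ) 1 :=
      ⟨lt_trans hp0.1 hρ1, lt_of_lt_of_le hρ2 (min_le_right u 1)⟩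
    have hbq : hillHorrorQuantile α ρ < b :=
      hsub ⟨lt_trans hplu.1 hρ1, lt_of_lt_of_le hρ2 (min_le_left u 1)⟩
    have hcnt : Tendsto (fun i =>
        ((Finset.univ.filter (fun j : Fin (n i) => X j ω ≤ hillHorrorQuantile α ρ)).card : ℝ)
          / (n i)) atTop (𝓝 (ρ:ℝ)) := (hω ρ hρIoo).comp hn
    have hlt : ∀ᶠ i in atTop, (k i : ℝ) / (n i) <
        ((Finset.univ.filter (fun j : Fin (n i) => X j ω ≤ hillHorrorQuantile α ρ)).card : ℝ)
          / (n i) := hratio.eventually_lt hcnt hρ1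
    have hnpos : ∀ᶠ i in atTop, 0 < n i := hn.eventually_gt_atTop 0
    filter_upwards [hlt, hnpos, hk1, hkn] with i h1 h2 h3 h4
    have hcard : k i ≤ (Finset.univ.filter
        (fun j : Fin (n i) => X j ω ≤ hillHorrorQuantile α ρ)).card := by
      have h5 := (div_lt_div_iff_of_pos_right (by exact_mod_cast h2 : (0:ℝ) < n i)).mp h1
      have h6 : k i < (Finset.univ.filter
          (fun j : Fin (n i) => X j ω ≤ hillHorrorQuantile α ρ)).card := by exact_mod_cast h5
      omega
    have hle : orderStat (n i) (fun j => X j ω) (k i) ≤ hillHorrorQuantile α ρ := by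
      rw [orderStat_le_iff _ h3 h4]
      exact hcard
    exact lt_of_le_of_lt hle hbq

lemma final_calc {s : ℕ} (hs : 2 ≤ s) {α : ℝ} (hα : 0 < α) :
    (Real.log (hillHorrorQuantile α ((s:ℝ)/((s:ℝ)+1)) /
        hillHorrorQuantile α (1/((s:ℝ)+1))) +
      Real.log (1 - Real.log s / Real.log ((s:ℝ)+1))) / Real.log s = 1/α := by
  have hS : (2:ℝ) ≤ s := by exact_mod_cast hs
  have hS0 : (0:ℝ) < s := by linarith
  have hS1 : (0:ℝ) < (s:ℝ)+1 := by linarith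
  have hLs : 0 < Real.log s := Real.log_pos (by linarith)
  have hLs1 : Real.log s < Real.log ((s:ℝ)+1) := Real.log_lt_log hS0 (by linarith)
  set Ls := Real.log (s:ℝ) with hLsdef
  set Ls1 := Real.log ((s:ℝ)+1) with hLs1def
  have hLs1pos : 0 < Ls1 := lt_trans hLs hLs1
  have hD : 0 < Ls1 - Ls := by linarith
  have h1p1 : 1 - (s:ℝ)/((s:ℝ)+1) = 1/((s:ℝ)+1) := by field_simp; ring
  have h1p2 : 1 - 1/((s:ℝ)+1) = (s:ℝ)/((s:ℝ)+1) := by field_simp; ring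
  have hb : (0:ℝ) < (1/((s:ℝ)+1)) ^ (1/α) := Real.rpow_pos_of_pos (by positivity) _
  have ha : (0:ℝ) < ((s:ℝ)/((s:ℝ)+1)) ^ (1/α) := Real.rpow_pos_of_pos (by positivity) _
  have hq2 : hillHorrorQuantile α ((s:ℝ)/((s:ℝ)+1)) = Ls1 / (1/((s:ℝ)+1)) ^ (1/α) := by
    rw [hillHorrorQuantile, h1p1]
    congr 1
    rw [one_div, Real.log_inv]
    ring
  have hq1 : hillHorrorQuantile α (1/((s:ℝ)+1))
      = (Ls1 - Ls) / ((s:ℝ)/((s:ℝ)+1)) ^ (1/α) := by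
    rw [hillHorrorQuantile, h1p2]
    congr 1
    rw [Real.log_div (ne_of_gt hS0) (ne_of_gt hS1)]
    ring
  have hab : ((s:ℝ)/((s:ℝ)+1)) ^ (1/α) = (s:ℝ)^(1/α) * (1/((s:ℝ)+1)) ^ (1/α) := by
    rw [← Real.mul_rpow (le_of_lt hS0) (by positivity)]
    congr 1
    field_simp
  have hsp : (0:ℝ) < (s:ℝ)^(1/α) := Real.rpow_pos_of_pos hS0 _
  have hratio : hillHorrorQuantile α ((s:ℝ)/((s:ℝ)+1)) / hillHorrorQuantile α (1/((s:ℝ)+1))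
      = (Ls1/(Ls1 - Ls)) * (s:ℝ)^(1/α) := by
    rw [hq1, hq2, hab]
    field_simp
  rw [hratio]
  have hlg : Real.log ((Ls1/(Ls1-Ls)) * (s:ℝ)^(1/α))
      = (Real.log Ls1 - Real.log (Ls1 - Ls)) + (1/α) * Ls := by
    rw [Real.log_mul (by positivity) (ne_of_gt hsp),
      Real.log_div (ne_of_gt hLs1pos) (ne_of_gt hD), Real.log_rpow hS0]
  have hC : 1 - Ls/Ls1 = (Ls1 - Ls)/Ls1 := by field_simp
  rw [hlg, hC, Real.log_div (ne_of_gt hD) (ne_of_gt hLs1pos)]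
  field_simp
  ring

/-- For fixed `s ≥ 2` and an i.i.d. sequence from the Hill-horror
distribution `HH(α)` (i.e. each `X_k` is distributed as the image of the uniform
distribution on `(0,1)` under `u ↦ -log(1-u)/(1-u)^{1/α}`), the estimators
`Q_{i,s}^{HH*} = [log(X_{(is,n)}/X_{(i,n)}) + log(1 - log s/log(s+1))]/log s`,
computed from the first `n = i(s+1)-1` observations, converge almost surely to
`1/α` as `i → ∞`. -/
theorem stmt12 {Ω : Type*} [MeasurableSpace Ω] (μ : Measure Ω) [IsProbabilityMeasure μ]
    (s : ℕ) (hs : 2 ≤ s) (α : ℝ) (hα : 0 < α)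
    (X : ℕ → Ω → ℝ) (hmeas : ∀ k, Measurable (X k))
    (hindep : iIndepFun X μ)
    (hdist : ∀ k, Measure.map (X k) μ =
      Measure.map (fun u => hillHorrorQuantile α u) (volume.restrict (Set.Ioo (0 : ℝ) 1))) :
    ∀ᵐ ω ∂μ, Tendsto (fun i : ℕ =>
        (Real.log
          (orderStat (i * (s + 1) - 1) (fun j => X j ω) (i * s) /
            orderStat (i * (s + 1) - 1) (fun j => X j ω) i) +
          Real.log (1 - Real.log s / Real.log (s + 1))) / Real.log s)
      atTop (nhds (1 / α)) := by
  have hS : (2:ℝ) ≤ (s:ℝ) := by exact_mod_cast hs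
  set n : ℕ → ℕ := fun i => i * (s + 1) - 1 with hndef
  have hnge : ∀ i : ℕ, 1 ≤ i → i * s ≤ n i ∧ i ≤ n i ∧ 1 ≤ i * s := by
    intro i hi
    have hmul : i * (s + 1) = i * s + i := by ring
    have hs1 : 1 ≤ i * s := Nat.one_le_iff_ne_zero.mpr (by positivity)
    refine ⟨?_, ?_, hs1⟩ <;> simp only [hndef] <;> omega
  have hn : Tendsto n atTop atTop := by
    refine tendsto_atTop_mono' atTop ?_ tendsto_id
    filter_upwards [eventually_ge_atTop 1] with i hi
    exact (hnge i hi).2.1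
  have hcast : ∀ᶠ i : ℕ in atTop, ((n i : ℕ) : ℝ) = (i:ℝ)*((s:ℝ)+1) - 1 := by
    filter_upwards [eventually_ge_atTop 1] with i hi
    have h1 : 1 ≤ i*(s+1) := Nat.one_le_iff_ne_zero.mpr (by positivity)
    rw [hndef]
    push_cast [Nat.cast_sub h1]
    ring
  have hbase : Tendsto (fun i : ℕ => ((s:ℝ)+1) - 1/(i:ℝ)) atTop (𝓝 (((s:ℝ)+1))) := by
    have := tendsto_const_nhds (x := ((s:ℝ)+1)) (f := atTop (α := ℕ))
    have h := this.sub tendsto_one_div_atTop_nhds_zero_nat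
    simpa using h
  have haux : ∀ i : ℕ, 1 ≤ i → ((i:ℝ)*((s:ℝ)+1) - 1 ≠ 0 ∧ ((s:ℝ)+1) - 1/(i:ℝ) ≠ 0 ∧ (i:ℝ) ≠ 0) := by
    intro i hi
    have hi' : (1:ℝ) ≤ (i:ℝ) := by exact_mod_cast hi
    have h1 : (3:ℝ) ≤ (i:ℝ)*((s:ℝ)+1) := by nlinarith
    have h2 : 1/(i:ℝ) ≤ 1 := by
      rw [div_le_one (by linarith)]; exact hi'
    exact ⟨by linarith, by linarith, by linarith⟩
  have hr1 : Tendsto (fun i : ℕ => ((i:ℝ))/((n i : ℕ):ℝ)) atTop (𝓝 (1/((s:ℝ)+1))) := by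
    have h := (tendsto_const_nhds (x := (1:ℝ)) (f := atTop (α := ℕ))).div hbase (by linarith)
    apply h.congr'
    filter_upwards [hcast, eventually_ge_atTop 1] with i hci hi
    obtain ⟨hd1, hd2, hd3⟩ := haux i hi
    simp only [Pi.div_apply]
    rw [hci, div_eq_div_iff hd2 hd1, one_mul]
    field_simp
  have hr2 : Tendsto (fun i : ℕ => ((i * s : ℕ):ℝ)/((n i : ℕ):ℝ)) atTop
      (𝓝 ((s:ℝ)/((s:ℝ)+1))) := by
    have h := (tendsto_const_nhds (x := ((s:ℝ)) ) (f := atTop (α := ℕ))).div hbase (by linarith)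
    apply h.congr'
    filter_upwards [hcast, eventually_ge_atTop 1] with i hci hi
    obtain ⟨hd1, hd2, hd3⟩ := haux i hi
    simp only [Pi.div_apply]
    push_cast
    rw [hci, div_eq_div_iff hd2 hd1]
    field_simp
  have hp01 : (1:ℝ)/((s:ℝ)+1) ∈ Set.Ioo (0:ℝ) 1 := by
    constructor
    · positivity
    · rw [div_lt_one (by linarith)]; linarith
  have hp02 : (s:ℝ)/((s:ℝ)+1) ∈ Set.Ioo (0:ℝ) 1 := by
    constructor
    · positivity
    · rw [div_lt_one (by linarith)]; linarith
  have hek1 : ∀ᶠ i : ℕ in atTop, 1 ≤ i := eventually_ge_atTop 1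
  have hekn : ∀ᶠ i : ℕ in atTop, i ≤ n i := by
    filter_upwards [eventually_ge_atTop 1] with i hi; exact (hnge i hi).2.1
  have hek1' : ∀ᶠ i : ℕ in atTop, 1 ≤ i * s := by
    filter_upwards [eventually_ge_atTop 1] with i hi; exact (hnge i hi).2.2
  have hekn' : ∀ᶠ i : ℕ in atTop, i * s ≤ n i := by
    filter_upwards [eventually_ge_atTop 1] with i hi; exact (hnge i hi).1
  have h1 := orderStat_conv μ hα X hmeas hindep hdist n (fun i => i) hn hek1 hekn hp01 hr1
  have h2 := orderStat_conv μ hα X hmeas hindep hdist n (fun i => i * s) hn hek1' hekn' hp02 hr2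
  filter_upwards [h1, h2] with ω hω1 hω2
  have hL1pos : 0 < hillHorrorQuantile α (1/((s:ℝ)+1)) := hq_pos hα hp01
  have hL2pos : 0 < hillHorrorQuantile α ((s:ℝ)/((s:ℝ)+1)) := hq_pos hα hp02
  have hdiv : Tendsto (fun i => orderStat (n i) (fun j => X j ω) (i * s) /
      orderStat (n i) (fun j => X j ω) i) atTop
      (𝓝 (hillHorrorQuantile α ((s:ℝ)/((s:ℝ)+1)) / hillHorrorQuantile α (1/((s:ℝ)+1)))) :=
    hω2.div hω1 (ne_of_gt hL1pos)
  have hlog : Tendsto (fun i => Real.log (orderStat (n i) (fun j => X j ω) (i * s) /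
      orderStat (n i) (fun j => X j ω) i)) atTop
      (𝓝 (Real.log (hillHorrorQuantile α ((s:ℝ)/((s:ℝ)+1)) /
        hillHorrorQuantile α (1/((s:ℝ)+1))))) :=
    (Real.continuousAt_log (ne_of_gt (div_pos hL2pos hL1pos))).tendsto.comp hdiv
  have hfin := (hlog.add_const (Real.log (1 - Real.log s / Real.log ((s:ℝ)+1)))).div_const
    (Real.log s)
  rw [final_calc hs hα] at hfin
  exact hfin
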